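/- Let α be a 1-form on a manifold M satisfying the integrability condition α ∧ dα = 0, and suppose dα = α ∧ β for a 1-form β. Then the 3-form β ∧ dβ is closed: d(β ∧ dβ) = 0. -/
import Mathlib


/- Abstract model of smooth forms on a manifold M.  a ∈ Gr 1 is a 1-form with the
integrability condition a ∧ da = 0, b ∈ Gr 1 a 1-form with da = a ∧ b (such a b
exists when a has the division property, e.g. when a is nowhere vanishing); the
division property of a is recorded as a hypothesis.  Claim: the Godbillon-Vey
3-form b ∧ db is closed: d(b ∧ db) = 0. -/
theorem godbillon_vey_form_closed
    (A : Type) [Ring A] [Algebra ℝ A]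
    (Gr : ℕ → Submodule ℝ A)
    (d : A →ₗ[ℝ] A)
    (hd2 : ∀ x : A, d (d x) = 0)
    (hdmem : ∀ (j : ℕ) (x : A), x ∈ Gr j → d x ∈ Gr (j + 1))
    (hmul : ∀ (i j : ℕ) (x y : A), x ∈ Gr i → y ∈ Gr j → x * y ∈ Gr (i + j))
    (hleib : ∀ (i : ℕ) (x y : A), x ∈ Gr i →
      d (x * y) = d x * y + ((-1 : ℝ) ^ i) • (x * d y))
    (hcomm : ∀ (i j : ℕ) (x y : A), x ∈ Gr i → y ∈ Gr j →
      y * x = ((-1 : ℝ) ^ (i * j)) • (x * y))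
    (a b : A) (ha : a ∈ Gr 1) (hb : b ∈ Gr 1)
    (hint : a * d a = 0)                                   -- integrability a ∧ da = 0
    (hstruct : d a = a * b)                                -- da = a ∧ b
    (hdiv : ∀ (k : ℕ) (ω : A), ω ∈ Gr k → ω * a = 0 →
      ∃ γ ∈ Gr (k - 1), ω = a * γ) :                       -- division property of a
    d (b * d b) = 0 := by
  -- odd forms square to zero
  have sq_zero : ∀ x : A, x ∈ Gr 1 → x * x = 0 := by
    intro x hx
    have h : x * x = -(x * x) := by simpa using hcomm 1 1 x x hx hx
    have h2 : (2 : ℝ) • (x * x) = 0 := by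
      rw [two_smul]
      linear_combination (norm := noncomm_ring) h
    have := congrArg (fun y => ((2 : ℝ)⁻¹) • y) h2
    simpa [smul_smul] using this
  have haa : a * a = 0 := sq_zero a ha
  have hbb : b * b = 0 := sq_zero b hb
  -- a * db = 0
  have hadb : a * d b = 0 := by
    have h0 : d (d a) = 0 := hd2 a
    rw [hstruct, hleib 1 a b ha, hstruct] at h0
    have : a * (b * b) + (-1 : ℝ) • (a * d b) = 0 := by
      rw [mul_assoc] at h0
      simpa using h0
    rw [hbb, mul_zero, zero_add, neg_smul, one_smul, neg_eq_zero] at this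
    exact this
  -- db * a = 0
  have hdba : d b * a = 0 := by
    have h := hcomm 1 2 a (d b) ha (hdmem 1 b hb)
    rw [h]
    simp [hadb]
  -- division: db = a * γ
  obtain ⟨γ, hγ, hdb⟩ := hdiv 2 (d b) (hdmem 1 b hb) hdba
  -- db * db = 0
  have hdbdb : d b * d b = 0 := by
    rw [hdb]
    have hγa : γ * a = (-1 : ℝ) • (a * γ) := by
      simpa using hcomm 1 1 a γ ha hγ
    calc a * γ * (a * γ) = a * (γ * a) * γ := by noncomm_ring
      _ = a * ((-1 : ℝ) • (a * γ)) * γ := by rw [hγa]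
      _ = (-1 : ℝ) • (a * a * γ * γ) := by
          rw [mul_smul_comm, smul_mul_assoc]; congr 1; noncomm_ring
      _ = 0 := by rw [haa]; simp
  rw [hleib 1 b (d b) hb, hdbdb, hd2, mul_zero, smul_zero, add_zero]
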